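/- Let F be an infinite family of axis-parallel rectangles in ℝ² such that F cannot be pierced by any finite set of axis-parallel lines. Then F contains an infinite sequence of rectangles R₁, R₂, … such that for all i ≠ j and both coordinates t ∈ {1,2}, the projections π_t(R_i) and π_t(R_j) are disjoint (hence no axis-parallel line meets two of them, and in particular the R_i are pairwise disjoint). -/

import Mathlib

open Set

/-- An axis-parallel box in `ℝ^d`: a product of closed bounded intervals. -/
def IsBox {d : ℕ} (B : Set (Fin d → ℝ)) : Prop :=
  ∃ a b : Fin d → ℝ, (∀ i, a i ≤ b i) ∧ B = {x | ∀ i, x i ∈ Set.Icc (a i) (b i)}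

/-- An axis-parallel `k`-flat in `ℝ^d`: coordinates in a set `I` of size `d - k` are fixed. -/
def IsAxisFlat {d : ℕ} (k : ℕ) (K : Set (Fin d → ℝ)) : Prop :=
  ∃ (I : Finset (Fin d)) (c : Fin d → ℝ), I.card = d - k ∧ K = {x | ∀ i ∈ I, x i = c i}

/-- An axis-parallel hyperplane in `ℝ^d`. -/
def IsAxisHyperplane {d : ℕ} (H : Set (Fin d → ℝ)) : Prop :=
  ∃ (i : Fin d) (c : ℝ), H = {x | x i = c}

/-- `F` is pierceable by finitely many axis-parallel `k`-flats. -/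
def PiercedByFlats {d : ℕ} (k : ℕ) (F : Set (Set (Fin d → ℝ))) : Prop :=
  ∃ K : Finset (Set (Fin d → ℝ)), (∀ f ∈ K, IsAxisFlat k f) ∧
    ∀ B ∈ F, ∃ f ∈ K, (B ∩ f).Nonempty

/-- `F` is pierceable by finitely many axis-parallel hyperplanes. -/
def PiercedByHyperplanes {d : ℕ} (F : Set (Set (Fin d → ℝ))) : Prop :=
  ∃ H : Finset (Set (Fin d → ℝ)), (∀ h ∈ H, IsAxisHyperplane h) ∧
    ∀ B ∈ F, ∃ h ∈ H, (B ∩ h).Nonempty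


lemma onedim {X : Type*} (U : Ultrafilter X) (f g : X → ℝ)
    (hpt : ∀ c : ℝ, {R : X | f R ≤ c ∧ c ≤ g R} ∉ U) :
    ∃ V ∈ U, ∀ R ∈ V, {S : X | g S < f R ∨ g R < f S} ∈ U := by
  have hsplit : ∀ c : ℝ, {S : X | g S < c} ∈ U ∨ {S : X | c < f S} ∈ U := by
    intro c
    have h1 : {R : X | f R ≤ c ∧ c ≤ g R}ᶜ ∈ U :=
      (Ultrafilter.compl_mem_iff_notMem).mpr (hpt c)
    have h2 : {R : X | f R ≤ c ∧ c ≤ g R}ᶜ = {S : X | g S < c} ∪ {S : X | c < f S} := by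
      ext S
      simp only [mem_compl_iff, mem_setOf_eq, mem_union, not_and_or, not_le]
      tauto
    rw [h2] at h1
    exact (Ultrafilter.union_mem_iff).mp h1
  by_cases hC : ∀ c : ℝ, {S : X | g S < c} ∈ U
  · exact ⟨univ, Filter.univ_mem, fun R _ =>
      Filter.mem_of_superset (hC (f R)) (fun S hS => Or.inl hS)⟩
  push_neg at hC; obtain ⟨c₀, hc₀⟩ := hC
  by_cases hD : ∀ c : ℝ, {S : X | c < f S} ∈ U
  · exact ⟨univ, Filter.univ_mem, fun R _ =>
      Filter.mem_of_superset (hD (g R)) (fun S hS => Or.inr hS)⟩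
  push_neg at hD; obtain ⟨c₁, hc₁⟩ := hD
  have hc₁C : {S : X | g S < c₁} ∈ U := (hsplit c₁).resolve_right hc₁
  set C : Set ℝ := {c | {S : X | g S < c} ∈ U} with hCdef
  have hne : C.Nonempty := ⟨c₁, hc₁C⟩
  have hmono : ∀ c c' : ℝ, c ≤ c' → c ∈ C → c' ∈ C := fun c c' h hc =>
    Filter.mem_of_superset hc (fun S hS => lt_of_lt_of_le hS h)
  have hbdd : BddBelow C := ⟨c₀, fun c hc => by
    by_contra h; push_neg at h; exact hc₀ (hmono c c₀ h.le hc)⟩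
  set p := sInf C with hp
  rcases hsplit p with hVp | hVp
  · refine ⟨{S : X | g S < p}, hVp, fun R hR => ?_⟩
    have key : {S : X | g R < f S} ∈ U := by
      rcases hsplit (g R) with h | h
      · exact absurd (csInf_le hbdd h) (not_le.mpr hR)
      · exact h
    exact Filter.mem_of_superset key (fun S hS => Or.inr hS)
  · refine ⟨{S : X | p < f S}, hVp, fun R hR => ?_⟩
    obtain ⟨c, hcC, hcf⟩ := exists_lt_of_csInf_lt hne hR
    exact Filter.mem_of_superset
      (Filter.mem_of_superset hcC (fun S hS => lt_trans hS hcf))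
      (fun S hS => Or.inl hS)

theorem stmt19 (F : Set (Set (Fin 2 → ℝ))) (hF : F.Infinite)
    (hbox : ∀ R ∈ F, IsBox R)
    (hnp : ¬ PiercedByHyperplanes F) :
    ∃ R : ℕ → Set (Fin 2 → ℝ), (∀ n, R n ∈ F) ∧ Function.Injective R ∧
      ∀ i j : ℕ, i ≠ j → ∀ t : Fin 2,
        ((fun x => x t) '' R i) ∩ ((fun x => x t) '' R j) = ∅ := by
  classical
  -- Basic pierceability facts
  have hPmono : ∀ s t : Set (Set (Fin 2 → ℝ)), s ⊆ t →
      PiercedByHyperplanes t → PiercedByHyperplanes s := by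
    rintro s t hst ⟨K, hK1, hK2⟩
    exact ⟨K, hK1, fun B hB => hK2 B (hst hB)⟩
  have hPunion : ∀ s t : Set (Set (Fin 2 → ℝ)),
      PiercedByHyperplanes s → PiercedByHyperplanes t →
      PiercedByHyperplanes (s ∪ t) := by
    rintro s t ⟨K1, hK11, hK12⟩ ⟨K2, hK21, hK22⟩
    refine ⟨K1 ∪ K2, ?_, ?_⟩
    · intro h hh
      rcases Finset.mem_union.mp hh with h' | h'
      · exact hK11 h h'
      · exact hK21 h h'
    · rintro B (hB | hB)
      · obtain ⟨h, hh, hint⟩ := hK12 B hB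
        exact ⟨h, Finset.mem_union_left _ hh, hint⟩
      · obtain ⟨h, hh, hint⟩ := hK22 B hB
        exact ⟨h, Finset.mem_union_right _ hh, hint⟩
  -- the index type
  set X := {R : Set (Fin 2 → ℝ) // R ∈ F} with hX
  -- box data
  have hbox' : ∀ R : X, IsBox R.1 := fun R => hbox R.1 R.2
  choose a b hab hB using hbox'
  have hmem_box : ∀ (R : X) (t : Fin 2) (c : ℝ), a R t ≤ c → c ≤ b R t →
      (fun i => if i = t then c else a R i) ∈ R.1 := by
    intro R t c h1 h2
    rw [hB R]
    intro i
    by_cases hi : i = t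
    · subst hi; simp [h1, h2]
    · simp [hi, hab R i]
  have himg : ∀ (R : X) (t : Fin 2), (fun x => x t) '' R.1 = Icc (a R t) (b R t) := by
    intro R t
    ext c
    constructor
    · rintro ⟨x, hx, rfl⟩
      rw [hB R] at hx
      exact hx t
    · rintro ⟨h1, h2⟩
      exact ⟨_, hmem_box R t c h1 h2, by simp⟩
  -- the filter of co-pierceable sets
  let F0 : Filter X :=
    { sets := {A : Set X | PiercedByHyperplanes (Subtype.val '' Aᶜ)}
      univ_sets := by
        simp only [mem_setOf_eq, compl_univ, image_empty]
        exact ⟨∅, by simp, by simp⟩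
      sets_of_superset := by
        intro A B hA hAB
        exact hPmono _ _ (image_mono (compl_subset_compl.mpr hAB)) hA
      inter_sets := by
        intro A B hA hB
        simp only [mem_setOf_eq, compl_inter] at *
        rw [image_union]
        exact hPunion _ _ hA hB }
  have hF0mem : ∀ A : Set X, A ∈ F0 ↔ PiercedByHyperplanes (Subtype.val '' Aᶜ) := fun A => Iff.rfl
  have hFne : Nonempty X := Nonempty.map (fun h => (⟨h.1, h.2⟩ : X)) hF.nonempty.to_subtype
  haveI : F0.NeBot := by
    rw [Filter.neBot_iff]
    intro h
    have h2 : (∅ : Set X) ∈ F0 := by rw [h]; exact Filter.mem_bot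
    rw [hF0mem] at h2
    simp only [compl_empty, image_univ, Subtype.range_coe_subtype] at h2
    exact hnp (by simpa using h2)
  let U : Ultrafilter X := Ultrafilter.of F0
  have hU : ∀ A : Set X, A ∈ U → ¬ PiercedByHyperplanes (Subtype.val '' A) := by
    intro A hA hP
    have h1 : Aᶜ ∈ F0 := by rw [hF0mem, compl_compl]; exact hP
    have h2 : Aᶜ ∈ U := Ultrafilter.of_le F0 h1
    have h3 : (∅ : Set X) ∈ U := by
      have := Filter.inter_mem hA h2
      rwa [inter_compl_self] at this
    exact (Ultrafilter.neBot U).ne' (Filter.empty_mem_iff_bot.mp h3) |>.elim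
  -- no single line pierces a U-large set
  have hpt : ∀ (t : Fin 2) (c : ℝ), {R : X | a R t ≤ c ∧ c ≤ b R t} ∉ U := by
    intro t c hmem
    apply hU _ hmem
    refine ⟨{ {x : Fin 2 → ℝ | x t = c} }, ?_, ?_⟩
    · intro h hh
      rw [Finset.mem_singleton] at hh
      exact ⟨t, c, hh⟩
    · rintro B ⟨R, hR, rfl⟩
      refine ⟨_, Finset.mem_singleton_self _,
        ⟨fun i => if i = t then c else a R i, hmem_box R t c hR.1 hR.2, by simp⟩⟩
  -- coordinatewise separation
  obtain ⟨V0, hV0U, hV0⟩ := onedim U (fun R => a R 0) (fun R => b R 0) (hpt 0)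
  obtain ⟨V1, hV1U, hV1⟩ := onedim U (fun R => a R 1) (fun R => b R 1) (hpt 1)
  let V : Set X := V0 ∩ V1
  have hVU : V ∈ U := Filter.inter_mem hV0U hV1U
  let D : X → Set X := fun R =>
    {S : X | ∀ t : Fin 2, b S t < a R t ∨ b R t < a S t}
  have hD : ∀ R ∈ V, D R ∈ U := by
    intro R hR
    have h0 := hV0 R hR.1
    have h1 := hV1 R hR.2
    have : {S : X | b S 0 < a R 0 ∨ b R 0 < a S 0} ∩
        {S : X | b S 1 < a R 1 ∨ b R 1 < a S 1} ⊆ D R := by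
      rintro S ⟨hS0, hS1⟩ t
      fin_cases t
      · exact hS0
      · exact hS1
    exact Filter.mem_of_superset (Filter.inter_mem h0 h1) this
  -- recursive construction
  let pick : {s : Set X // s ∈ U ∧ s ⊆ V} → X := fun s =>
    (Filter.nonempty_of_mem (s.2.1 : s.1 ∈ (U : Filter X))).some
  have pick_mem : ∀ s, pick s ∈ s.1 := fun s => Set.Nonempty.some_mem _
  let A : ℕ → {s : Set X // s ∈ U ∧ s ⊆ V} := fun n =>
    Nat.rec ⟨V, hVU, subset_rfl⟩
      (fun _ p => ⟨p.1 ∩ D (pick p),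
        Filter.inter_mem p.2.1 (hD _ (p.2.2 (pick_mem p))),
        fun x hx => p.2.2 hx.1⟩) n
  let seq : ℕ → X := fun n => pick (A n)
  have hAsucc : ∀ n, (A (n+1)).1 = (A n).1 ∩ D (seq n) := fun n => rfl
  have hAmono : ∀ i j : ℕ, i ≤ j → (A j).1 ⊆ (A i).1 := by
    intro i j hij
    induction j with
    | zero => rw [Nat.le_zero.mp hij]
    | succ k ih =>
      rcases Nat.lt_or_ge i (k+1) with h | h
      · exact fun x hx => ih (Nat.lt_succ_iff.mp h) (by rw [hAsucc] at hx; exact hx.1)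
      · rw [Nat.le_antisymm hij h]
  have hsep : ∀ i j : ℕ, i < j → seq j ∈ D (seq i) := by
    intro i j hij
    have h1 : seq j ∈ (A j).1 := pick_mem _
    have h2 : (A j).1 ⊆ (A (i+1)).1 := hAmono _ _ hij
    have h3 := h2 h1
    rw [hAsucc] at h3
    exact h3.2
  -- separation in terms of projections
  have hdisj : ∀ i j : ℕ, i ≠ j → ∀ t : Fin 2,
      ((fun x => x t) '' (seq i).1) ∩ ((fun x => x t) '' (seq j).1) = ∅ := by
    have key : ∀ i j : ℕ, seq j ∈ D (seq i) → ∀ t : Fin 2,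
        ((fun x => x t) '' (seq i).1) ∩ ((fun x => x t) '' (seq j).1) = ∅ := by
      intro i j hij t
      rw [himg, himg, eq_empty_iff_forall_notMem]
      rintro c ⟨⟨h1, h2⟩, h3, h4⟩
      rcases hij t with h | h
      · have := hab (seq j) t
        linarith
      · linarith
    intro i j hij t
    rcases Nat.lt_or_ge i j with h | h
    · exact key i j (hsep i j h) t
    · have hlt : j < i := lt_of_le_of_ne h (Ne.symm hij)
      rw [inter_comm]
      exact key j i (hsep j i hlt) t
  refine ⟨fun n => (seq n).1, fun n => (seq n).2, ?_, hdisj⟩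
  intro i j hij
  by_contra hne
  have h := hdisj i j hne 0
  have hij' : (seq i).1 = (seq j).1 := hij
  rw [hij', inter_self, himg] at h
  exact (nonempty_Icc.mpr (hab (seq j) 0)).ne_empty h
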